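/- If f : ℝ → [0,∞) has a closed graph and the graph of f is connected, then f is continuous. -/
import Mathlib

open Set

lemma ivp_up (f : ℝ → ℝ)
    (hconn : IsConnected {p : ℝ × ℝ | p.2 = f p.1})
    {α β c : ℝ} (hαβ : α < β) (h1 : f α < c) (h2 : c < f β) :
    ∃ x ∈ Set.Icc α β, f x = c := by
  by_contra h
  push_neg at h
  set U : Set (ℝ × ℝ) := {p | p.1 < α ∨ (p.1 < β ∧ p.2 < c)} with hU
  set V : Set (ℝ × ℝ) := {p | β < p.1 ∨ (α < p.1 ∧ c < p.2)} with hV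
  have hUopen : IsOpen U :=
    (isOpen_lt continuous_fst continuous_const).union
      ((isOpen_lt continuous_fst continuous_const).inter
        (isOpen_lt continuous_snd continuous_const))
  have hVopen : IsOpen V :=
    (isOpen_lt continuous_const continuous_fst).union
      ((isOpen_lt continuous_const continuous_fst).inter
        (isOpen_lt continuous_const continuous_snd))
  have hcover : {p : ℝ × ℝ | p.2 = f p.1} ⊆ U ∪ V := by
    rintro ⟨x, y⟩ hy
    simp only [mem_setOf_eq] at hy
    subst hy
    by_cases hxα : x < α
    · exact Or.inl (Or.inl hxα)
    by_cases hxβ : β < x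
    · exact Or.inr (Or.inl hxβ)
    push_neg at hxα hxβ
    have hne : f x ≠ c := h x ⟨hxα, hxβ⟩
    rcases lt_or_gt_of_ne hne with hlt | hgt
    · have hxβ' : x < β := by
        rcases eq_or_lt_of_le hxβ with rfl | h'
        · exact absurd hlt (by linarith)
        · exact h'
      exact Or.inl (Or.inr ⟨hxβ', hlt⟩)
    · have hxα' : α < x := by
        rcases eq_or_lt_of_le hxα with h' | h'
        · exact absurd hgt (by rw [← h']; linarith)
        · exact h'
      exact Or.inr (Or.inr ⟨hxα', hgt⟩)
  have hnU : ({p : ℝ × ℝ | p.2 = f p.1} ∩ U).Nonempty :=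
    ⟨(α, f α), rfl, Or.inr ⟨hαβ, h1⟩⟩
  have hnV : ({p : ℝ × ℝ | p.2 = f p.1} ∩ V).Nonempty :=
    ⟨(β, f β), rfl, Or.inr ⟨hαβ, h2⟩⟩
  obtain ⟨p, _, hpU, hpV⟩ :=
    hconn.isPreconnected U V hUopen hVopen hcover hnU hnV
  rcases hpU with h' | ⟨h1', h2'⟩ <;> rcases hpV with h'' | ⟨h1'', h2''⟩ <;> linarith

lemma ivp_down (f : ℝ → ℝ)
    (hconn : IsConnected {p : ℝ × ℝ | p.2 = f p.1})
    {α β c : ℝ} (hαβ : α < β) (h1 : c < f α) (h2 : f β < c) :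
    ∃ x ∈ Set.Icc α β, f x = c := by
  by_contra h
  push_neg at h
  set U : Set (ℝ × ℝ) := {p | p.1 < α ∨ (p.1 < β ∧ c < p.2)} with hU
  set V : Set (ℝ × ℝ) := {p | β < p.1 ∨ (α < p.1 ∧ p.2 < c)} with hV
  have hUopen : IsOpen U :=
    (isOpen_lt continuous_fst continuous_const).union
      ((isOpen_lt continuous_fst continuous_const).inter
        (isOpen_lt continuous_const continuous_snd))
  have hVopen : IsOpen V :=
    (isOpen_lt continuous_const continuous_fst).union
      ((isOpen_lt continuous_const continuous_fst).inter
        (isOpen_lt continuous_snd continuous_const))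
  have hcover : {p : ℝ × ℝ | p.2 = f p.1} ⊆ U ∪ V := by
    rintro ⟨x, y⟩ hy
    simp only [mem_setOf_eq] at hy
    subst hy
    by_cases hxα : x < α
    · exact Or.inl (Or.inl hxα)
    by_cases hxβ : β < x
    · exact Or.inr (Or.inl hxβ)
    push_neg at hxα hxβ
    have hne : f x ≠ c := h x ⟨hxα, hxβ⟩
    rcases lt_or_gt_of_ne hne with hlt | hgt
    · have hxα' : α < x := by
        rcases eq_or_lt_of_le hxα with h' | h'
        · exact absurd hlt (by rw [← h']; linarith)
        · exact h'
      exact Or.inr (Or.inr ⟨hxα', hlt⟩)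
    · have hxβ' : x < β := by
        rcases eq_or_lt_of_le hxβ with rfl | h'
        · exact absurd hgt (by linarith)
        · exact h'
      exact Or.inl (Or.inr ⟨hxβ', hgt⟩)
  have hnU : ({p : ℝ × ℝ | p.2 = f p.1} ∩ U).Nonempty :=
    ⟨(α, f α), rfl, Or.inr ⟨hαβ, h1⟩⟩
  have hnV : ({p : ℝ × ℝ | p.2 = f p.1} ∩ V).Nonempty :=
    ⟨(β, f β), rfl, Or.inr ⟨hαβ, h2⟩⟩
  obtain ⟨p, _, hpU, hpV⟩ :=
    hconn.isPreconnected U V hUopen hVopen hcover hnU hnV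
  rcases hpU with h' | ⟨h1', h2'⟩ <;> rcases hpV with h'' | ⟨h1'', h2''⟩ <;> linarith

theorem closed_connected_graph_real_line_continuous
    (f : ℝ → ℝ) (hnonneg : ∀ x, 0 ≤ f x)
    (hclosed : IsClosed {p : ℝ × ℝ | p.2 = f p.1})
    (hconn : IsConnected {p : ℝ × ℝ | p.2 = f p.1}) :
    Continuous f := by
  rw [continuous_iff_continuousAt]
  intro a
  rw [Metric.continuousAt_iff]
  by_contra hcont
  push_neg at hcont
  obtain ⟨ε, hε, hbad⟩ := hcont
  have key : ∀ c : ℝ, (∀ δ > (0:ℝ), ∃ y, |y - a| < δ ∧ f y = c) → f a = c := by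
    intro c hc
    have hmem : (a, c) ∈ closure {p : ℝ × ℝ | p.2 = f p.1} := by
      rw [Metric.mem_closure_iff]
      intro δ hδ
      obtain ⟨y, hy1, hy2⟩ := hc δ hδ
      refine ⟨(y, c), hy2.symm, ?_⟩
      rw [Prod.dist_eq]
      simp only [Real.dist_eq, sub_self, abs_zero]
      rw [abs_sub_comm] at hy1
      exact max_lt hy1 hδ
    rw [hclosed.closure_eq] at hmem
    exact hmem.symm
  by_cases h1 : ∀ δ > (0:ℝ), ∃ y, |y - a| < δ ∧ f y = f a + ε / 2
  · have := key _ h1; linarith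
  by_cases h2 : ∀ δ > (0:ℝ), ∃ y, |y - a| < δ ∧ f y = f a - ε / 2
  · have := key _ h2; linarith
  push_neg at h1 h2
  obtain ⟨δ₁, hδ₁, hno1⟩ := h1
  obtain ⟨δ₂, hδ₂, hno2⟩ := h2
  obtain ⟨x, hx1, hx2⟩ := hbad (min δ₁ δ₂) (lt_min hδ₁ hδ₂)
  rw [Real.dist_eq] at hx1 hx2
  rw [abs_lt] at hx1
  have hd1 : x - a < δ₁ := lt_of_lt_of_le hx1.2 (min_le_left _ _)
  have hd2 : x - a < δ₂ := lt_of_lt_of_le hx1.2 (min_le_right _ _)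
  have hd1' : -δ₁ < x - a := lt_of_le_of_lt (neg_le_neg (min_le_left _ _)) hx1.1
  have hd2' : -δ₂ < x - a := lt_of_le_of_lt (neg_le_neg (min_le_right _ _)) hx1.1
  rcases le_abs.mp hx2 with hA | hB
  · -- f x ≥ f a + ε
    have hfx : f a + ε ≤ f x := by linarith
    rcases lt_trichotomy a x with hax | hax | hax
    · obtain ⟨y, hy, hfy⟩ := ivp_up f hconn hax (by linarith : f a < f a + ε / 2)
        (by linarith : f a + ε / 2 < f x)
      exact hno1 y (abs_lt.mpr ⟨by linarith [hy.1], by linarith [hy.2]⟩) hfy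
    · rw [hax] at hfx; linarith
    · obtain ⟨y, hy, hfy⟩ := ivp_down f hconn hax
        (by linarith : f a + ε / 2 < f x) (by linarith : f a < f a + ε / 2)
      exact hno1 y (abs_lt.mpr ⟨by linarith [hy.1], by linarith [hy.2]⟩) hfy
  · -- f x ≤ f a - ε
    have hfx : f x ≤ f a - ε := by linarith
    rcases lt_trichotomy a x with hax | hax | hax
    · obtain ⟨y, hy, hfy⟩ := ivp_down f hconn hax
        (by linarith : f a - ε / 2 < f a) (by linarith : f x < f a - ε / 2)
      exact hno2 y (abs_lt.mpr ⟨by linarith [hy.1], by linarith [hy.2]⟩) hfy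
    · rw [hax] at hfx; linarith
    · obtain ⟨y, hy, hfy⟩ := ivp_up f hconn hax
        (by linarith : f x < f a - ε / 2) (by linarith : f a - ε / 2 < f a)
      exact hno2 y (abs_lt.mpr ⟨by linarith [hy.1], by linarith [hy.2]⟩) hfy
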